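/- Let J be a finite index set, let f_i ∈ ℝ³ and f_j ∈ ℝ³ for j ∈ J, all nonzero, and let k : J → ℝ. For a nonzero x ∈ ℝ³ write x⁻¹ := −x/‖x‖² (minus the inversion in the unit sphere). If ∑_{j∈J} k_j (f_j − f_i) = 0 and ∑_{j∈J} k_j (‖f_j‖² − ‖f_i‖²) = 0, then ∑_{j∈J} k_j ‖f_i‖² ‖f_j‖² (f_j⁻¹ − f_i⁻¹) = 0. -/

import Mathlib

open scoped RealInnerProductSpace

/-- Minus the inversion in the unit sphere: `x ↦ −x/‖x‖²`. -/
noncomputable def sphInv (x : EuclideanSpace ℝ (Fin 3)) : EuclideanSpace ℝ (Fin 3) :=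
  -(‖x‖ ^ 2)⁻¹ • x

/-- If `∑ k_j (f_j − f_i) = 0` and `∑ k_j (‖f_j‖² − ‖f_i‖²) = 0`, then
`∑ k_j ‖f_i‖² ‖f_j‖² (f_j⁻¹ − f_i⁻¹) = 0`, where `x⁻¹ = −x/‖x‖²`. -/
theorem stmt_2 {J : Type*} [Fintype J]
    (fi : EuclideanSpace ℝ (Fin 3)) (f : J → EuclideanSpace ℝ (Fin 3))
    (hfi : fi ≠ 0) (hf : ∀ j, f j ≠ 0) (k : J → ℝ)
    (h1 : ∑ j, k j • (f j - fi) = 0)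
    (h2 : ∑ j, k j * (‖f j‖ ^ 2 - ‖fi‖ ^ 2) = 0) :
    ∑ j, (k j * ‖fi‖ ^ 2 * ‖f j‖ ^ 2) • (sphInv (f j) - sphInv fi) = 0 := by
  have key : ∀ j, (k j * ‖fi‖ ^ 2 * ‖f j‖ ^ 2) • (sphInv (f j) - sphInv fi)
      = (-(‖fi‖ ^ 2)) • (k j • (f j - fi)) + (k j * (‖f j‖ ^ 2 - ‖fi‖ ^ 2)) • fi := by
    intro j
    have hni : ‖fi‖ ^ 2 ≠ 0 := pow_ne_zero _ (norm_ne_zero_iff.mpr hfi)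
    have hnj : ‖f j‖ ^ 2 ≠ 0 := pow_ne_zero _ (norm_ne_zero_iff.mpr (hf j))
    simp only [sphInv, smul_sub, smul_smul, smul_add, neg_smul, smul_neg]
    rw [show k j * ‖fi‖ ^ 2 * ‖f j‖ ^ 2 * (‖f j‖ ^ 2)⁻¹ = k j * ‖fi‖ ^ 2 by
      rw [mul_assoc, mul_inv_cancel₀ hnj, mul_one], show k j * ‖fi‖ ^ 2 * ‖f j‖ ^ 2 * (‖fi‖ ^ 2)⁻¹ = k j * ‖f j‖ ^ 2 by
      field_simp]
    module
  calc ∑ j, (k j * ‖fi‖ ^ 2 * ‖f j‖ ^ 2) • (sphInv (f j) - sphInv fi)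
      = ∑ j, ((-(‖fi‖ ^ 2)) • (k j • (f j - fi)) + (k j * (‖f j‖ ^ 2 - ‖fi‖ ^ 2)) • fi) := by
        simp_rw [key]
    _ = (-(‖fi‖ ^ 2)) • (∑ j, k j • (f j - fi)) + (∑ j, k j * (‖f j‖ ^ 2 - ‖fi‖ ^ 2)) • fi := by
        rw [Finset.sum_add_distrib, Finset.smul_sum, Finset.sum_smul]
    _ = 0 := by rw [h1, h2]; simp
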